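/- arXiv:1407.6958 — 7 statements merged into one kernel-verified Lean document; each statement's English description precedes it below -/
import Mathlib

section
/- Let G be a connected undirected multigraph without loops and x a chip-distribution on G with total number of chips greater than 2|E(G)| - |V(G)|. Then x is non-terminating: every legal chip-firing game starting from x can be continued indefinitely. -/
/- Common definitions for chip-firing on multigraphs/digraphs.

A digraph (without a fixed vertex enumeration) on a finite vertex type `V`
is given by its arc-multiplicity function `a : V → V → ℕ` (`a u v` = number
of arcs from `u` to `v`).  An undirected multigraph is the special case of a
symmetric multiplicity function `d` (`d u v` = number of edges between `u`
and `v`); then `outDeg d v = ∑ u, d v u` is the degree of `v`, and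
`∑ v, ∑ u, d v u = 2 |E|`. -/

variable {V : Type*} [Fintype V] [DecidableEq V]

/-- Outdegree of `v` (= degree in the undirected, i.e. symmetric, case). -/
def outDeg (a : V → V → ℕ) (v : V) : ℕ := ∑ u, a v u

/-- Indegree of `v`. -/
def inDeg (a : V → V → ℕ) (v : V) : ℕ := ∑ u, a u v

/-- The distribution obtained from `x` by firing the vertex `v`:
`v` loses `outDeg a v` chips and each `u` receives `a v u` chips. -/
def fire (a : V → V → ℕ) (x : V → ℕ) (v : V) : V → ℕ :=
  fun u => x u + a v u - (if u = v then outDeg a v else 0)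

/-- The distribution obtained from `x` after firing the vertices in the list
`l`, in order. -/
def run (a : V → V → ℕ) (x : V → ℕ) : List V → (V → ℕ)
  | [] => x
  | v :: l => run a (fire a x v) l

/-- The sequence of firings `l` starting from the distribution `x` is a legal
game: each fired vertex is active (has at least `outDeg` many chips) when it
is fired. -/
def LegalGame (a : V → V → ℕ) : (V → ℕ) → List V → Prop
  | _, [] => True
  | x, v :: l => outDeg a v ≤ x v ∧ LegalGame a (fire a x v) l

/-- `x` is non-terminating: after any legal game from `x` there is still an
active vertex, so every legal game can be continued indefinitely. -/
def Nonterminating (a : V → V → ℕ) (x : V → ℕ) : Prop :=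
  ∀ l : List V, LegalGame a x l → ∃ v, outDeg a v ≤ run a x l v

/-- `x` is terminating: some legal game from `x` reaches a distribution with
no active vertex. -/
def Terminates (a : V → V → ℕ) (x : V → ℕ) : Prop :=
  ∃ l : List V, LegalGame a x l ∧ ∀ v, run a x l v < outDeg a v

/-- No loops. -/
def Loopless (a : V → V → ℕ) : Prop := ∀ v, a v v = 0

/-- Connectivity of an undirected multigraph `d`. -/
def UConnected (d : V → V → ℕ) : Prop :=
  ∀ u v : V, Relation.ReflTransGen (fun p q => 0 < d p q) u v

/-- Weak connectivity of a digraph `a`. -/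
def WConnected (a : V → V → ℕ) : Prop :=
  ∀ u v : V, Relation.ReflTransGen (fun p q => 0 < a p q ∨ 0 < a q p) u v

/-- A digraph is acyclic if it has no directed cycle. -/
def AcyclicDigraph (a : V → V → ℕ) : Prop :=
  ∀ v : V, ¬ Relation.TransGen (fun p q => 0 < a p q) v v

/-- `a` is an orientation of the undirected multigraph `d`. -/
def IsOrientation (d a : V → V → ℕ) : Prop := ∀ u v, a u v + a v u = d u v

/-- A digraph is Eulerian if `d⁺(v) = d⁻(v)` for every vertex. -/
def EulerianD (a : V → V → ℕ) : Prop := ∀ v, outDeg a v = inDeg a v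

/-- `f` is a feedback arc set of the digraph `a`: a subset of the arcs whose
removal leaves an acyclic digraph. -/
def IsFAS (a f : V → V → ℕ) : Prop :=
  (∀ u v, f u v ≤ a u v) ∧ AcyclicDigraph (fun u v => a u v - f u v)

/-- Number of arcs in an arc set. -/
def arcSize (f : V → V → ℕ) : ℕ := ∑ u, ∑ v, f u v

/-- Degree of a divisor. -/
def divDeg (f : V → ℤ) : ℤ := ∑ v, f v

/-- Effective divisor. -/
def Effective (f : V → ℤ) : Prop := ∀ v, 0 ≤ f v

/-- Linear equivalence of divisors on the multigraph `d`: they differ by an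
integer combination of the columns of the Laplacian. -/
def LinEquiv (d : V → V → ℕ) (f g : V → ℤ) : Prop :=
  ∃ z : V → ℤ, ∀ v, g v = f v + ∑ u, (d v u : ℤ) * (z u - z v)

/-- `r` is the Baker–Norine rank of the divisor `f` on the multigraph `d`. -/
def IsRank (d : V → V → ℕ) (f : V → ℤ) (r : ℤ) : Prop :=
  IsLeast {m : ℤ | ∃ g : V → ℤ, Effective g ∧
    (¬ ∃ h : V → ℤ, Effective h ∧ LinEquiv d (fun v => f v - g v) h) ∧
    m = divDeg g - 1} r

lemma sum_fire (a : V → V → ℕ) (x : V → ℕ) (v : V) (h : outDeg a v ≤ x v) :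
    ∑ u, fire a x v u = ∑ u, x u := by
  have h1 : ∑ u, fire a x v u
      = fire a x v v + ∑ u ∈ Finset.univ.erase v, fire a x v u :=
    (Finset.add_sum_erase _ _ (Finset.mem_univ v)).symm
  have h2 : ∑ u, x u = x v + ∑ u ∈ Finset.univ.erase v, x u :=
    (Finset.add_sum_erase _ _ (Finset.mem_univ v)).symm
  have h3 : outDeg a v = a v v + ∑ u ∈ Finset.univ.erase v, a v u :=
    (Finset.add_sum_erase _ _ (Finset.mem_univ v)).symm
  have h4 : ∑ u ∈ Finset.univ.erase v, fire a x v u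
      = ∑ u ∈ Finset.univ.erase v, (x u + a v u) := by
    refine Finset.sum_congr rfl fun u hu => ?_
    have : u ≠ v := Finset.ne_of_mem_erase hu
    simp [fire, this]
  have h5 : fire a x v v = x v + a v v - outDeg a v := by simp [fire]
  rw [h1, h4, h5, Finset.sum_add_distrib, h2]
  omega

lemma sum_run (a : V → V → ℕ) (x : V → ℕ) (l : List V) (h : LegalGame a x l) :
    ∑ u, run a x l u = ∑ u, x u := by
  induction l generalizing x with
  | nil => rfl
  | cons v l ih =>
    obtain ⟨hv, hl⟩ := h
    rw [run, ih _ hl, sum_fire a x v hv]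

/-- A chip-distribution on a connected loopless multigraph with more
than `2|E| - |V|` chips is non-terminating. -/
theorem stmt0 {V : Type*} [Fintype V] [DecidableEq V]
    (d : V → V → ℕ) (hsym : ∀ u v, d u v = d v u) (hloop : Loopless d)
    (hconn : UConnected d) (x : V → ℕ)
    (hx : (∑ v, ∑ u, (d v u : ℤ)) - Fintype.card V < ∑ v, (x v : ℤ)) :
    Nonterminating d x := by
  intro l hl
  by_contra h
  push_neg at h
  have hsum : ∑ u, run d x l u = ∑ u, x u := sum_run d x l hl
  have hle : ∀ v, (run d x l v : ℤ) + 1 ≤ outDeg d v := by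
    intro v; exact_mod_cast h v
  have h1 : ∑ v, ((run d x l v : ℤ) + 1) ≤ ∑ v, (outDeg d v : ℤ) :=
    Finset.sum_le_sum fun v _ => hle v
  have h2 : ∑ v, (outDeg d v : ℤ) = ∑ v, ∑ u, (d v u : ℤ) := by
    simp [outDeg]
  have h3 : ∑ v, ((run d x l v : ℤ) + 1)
      = (∑ v, (run d x l v : ℤ)) + Fintype.card V := by
    rw [Finset.sum_add_distrib, Finset.sum_const, Fintype.card, nsmul_eq_mul, mul_one]
  have h4 : ∑ v, (run d x l v : ℤ) = ∑ v, (x v : ℤ) := by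
    exact_mod_cast congrArg (Nat.cast : ℕ → ℤ) hsum
  omega
end

section
/- Let F be a minimum cardinality feedback arc set of a digraph D. Then there exists a vertex v₀ of D such that among all edges incident to v₀, F contains exactly the in-edges of v₀ (all in-edges of v₀ belong to F, and no out-edge of v₀ belongs to F). -/
/- Common definitions for chip-firing on multigraphs/digraphs.

A digraph (without a fixed vertex enumeration) on a finite vertex type `V`
is given by its arc-multiplicity function `a : V → V → ℕ` (`a u v` = number
of arcs from `u` to `v`).  An undirected multigraph is the special case of a
symmetric multiplicity function `d` (`d u v` = number of edges between `u`
and `v`); then `outDeg d v = ∑ u, d v u` is the degree of `v`, and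
`∑ v, ∑ u, d v u = 2 |E|`. -/

variable {V : Type*} [Fintype V] [DecidableEq V]

/-- Any acyclic relation on a finite nonempty type has a source. -/
lemma exists_source {V : Type*} [Fintype V] [Nonempty V] (r : V → V → Prop)
    (h : ∀ v, ¬ Relation.TransGen r v v) : ∃ v₀, ∀ u, ¬ r u v₀ := by
  haveI : IsTrans V (Relation.TransGen r) := ⟨fun _ _ _ => Relation.TransGen.trans⟩
  haveI : IsIrrefl V (Relation.TransGen r) := ⟨h⟩
  obtain ⟨v₀, -, hmin⟩ :=
    (Finite.wellFounded_of_trans_of_irrefl (Relation.TransGen r)).has_min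
      Set.univ Set.univ_nonempty
  exact ⟨v₀, fun u hu => hmin u (Set.mem_univ u) (Relation.TransGen.single hu)⟩

/-- a minimum cardinality feedback arc set `f` of a digraph contains,
for some vertex `v₀`, exactly the in-edges of `v₀` among the edges incident to `v₀`. -/
theorem stmt6 {V : Type*} [Fintype V] [DecidableEq V] [Nonempty V]
    (a : V → V → ℕ) (hloop : Loopless a) (hconn : WConnected a)
    (f : V → V → ℕ) (hfas : IsFAS a f)
    (hmin : ∀ g : V → V → ℕ, IsFAS a g → arcSize f ≤ arcSize g) :
    ∃ v₀ : V, (∀ u, f u v₀ = a u v₀) ∧ (∀ u, f v₀ u = 0) := by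
  obtain ⟨hle, hacyc⟩ := hfas
  obtain ⟨v₀, hv₀⟩ := exists_source (fun p q => 0 < a p q - f p q) hacyc
  have hcol : ∀ u, f u v₀ = a u v₀ := fun u => by
    have := hv₀ u; have := hle u v₀; omega
  refine ⟨v₀, hcol, ?_⟩
  set g : V → V → ℕ := fun u v => if u = v₀ then 0 else f u v with hg
  have hgle : ∀ u v, g u v ≤ f u v := by
    intro u v; by_cases h : u = v₀ <;> simp [hg, h]
  have hnoin : ∀ u, ¬ (0 < a u v₀ - g u v₀) := by
    intro u
    by_cases h : u = v₀
    · rw [h]; simp [hg, hloop v₀]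
    · simp [hg, h, hcol u]
  have hstep : ∀ p q, p ≠ v₀ → 0 < a p q - g p q → 0 < a p q - f p q := by
    intro p q hp h; simpa [hg, hp] using h
  have hgfas : IsFAS a g := by
    refine ⟨fun u v => (hgle u v).trans (hle u v), ?_⟩
    intro w hw
    have key : ∀ p q, Relation.TransGen (fun p q => 0 < a p q - g p q) p q →
        q ≠ v₀ ∧ (p ≠ v₀ → Relation.TransGen (fun p q => 0 < a p q - f p q) p q) := by
      intro p q h
      induction h with
      | single h =>
          exact ⟨fun e => hnoin _ (e ▸ h), fun hp => .single (hstep _ _ hp h)⟩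
      | tail h hlast ih =>
          exact ⟨fun e => hnoin _ (e ▸ hlast),
            fun hp => (ih.2 hp).tail (hstep _ _ ih.1 hlast)⟩
    obtain ⟨hne, hf⟩ := key w w hw
    exact hacyc w (hf hne)
  have hsum : arcSize g ≤ arcSize f :=
    Finset.sum_le_sum fun u _ => Finset.sum_le_sum fun v _ => hgle u v
  have heq : arcSize f = arcSize g := le_antisymm (hmin g hgfas) hsum
  have hrow : ∀ u, ∑ v, g u v = ∑ v, f u v := by
    have := (Finset.sum_eq_sum_iff_of_le
      (fun u _ => Finset.sum_le_sum fun v _ => hgle u v)).mp heq.symm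
    exact fun u => this u (Finset.mem_univ u)
  have h0 : ∑ v, f v₀ v = 0 := by
    have := hrow v₀; simp [hg] at this; omega
  intro u
  have := (Finset.sum_eq_zero_iff).mp h0 u (Finset.mem_univ u)
  exact this
end

section
/- Let D be a connected Eulerian digraph without loops and x a chip-distribution on D. If at some point of a legal chip-firing game from x every vertex has already fired at least once, then from the current distribution there is an ordering v₁, …, v_n of all vertices such that firing them in this order (once each) is a legal sequence of firings. -/
/- Common definitions for chip-firing on multigraphs/digraphs.

A digraph (without a fixed vertex enumeration) on a finite vertex type `V`
is given by its arc-multiplicity function `a : V → V → ℕ` (`a u v` = number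
of arcs from `u` to `v`).  An undirected multigraph is the special case of a
symmetric multiplicity function `d` (`d u v` = number of edges between `u`
and `v`); then `outDeg d v = ∑ u, d v u` is the degree of `v`, and
`∑ v, ∑ u, d v u = 2 |E|`. -/

variable {V : Type*} [Fintype V] [DecidableEq V]

lemma run_append' (a : V → V → ℕ) (s t : List V) : ∀ x : V → ℕ,
    run a x (s ++ t) = run a (run a x s) t := by
  induction s with
  | nil => intro x; rfl
  | cons v s ih => intro x; rw [List.cons_append, run, run, ih]

lemma run_not_mem' (a : V → V → ℕ) (m : List V) (v : V) (h : v ∉ m) : ∀ x : V → ℕ,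
    run a x m v = x v + (m.map (fun u => a u v)).sum := by
  induction m with
  | nil => intro x; simp [run]
  | cons u m ih =>
    intro x
    simp only [List.mem_cons, not_or] at h
    rw [run, ih h.2]
    have : fire a x u v = x v + a u v := by
      simp [fire, if_neg h.1]
    rw [this, List.map_cons, List.sum_cons]
    ring

lemma toFinset_sum_le' (f : V → ℕ) (m : List V) :
    ∑ u ∈ m.toFinset, f u ≤ (m.map f).sum := by
  induction m with
  | nil => simp
  | cons b m ih =>
    simp only [List.toFinset_cons, List.map_cons, List.sum_cons]
    by_cases hb : b ∈ m.toFinset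
    · rw [Finset.insert_eq_self.mpr hb]
      exact le_add_of_nonneg_of_le (Nat.zero_le _) ih
    · rw [Finset.sum_insert hb]
      exact Nat.add_le_add_left ih _

lemma dedup_split' (l : List V) (v : V) : ∀ p q : List V, l.dedup = p ++ v :: q →
    ∃ m1 m2 : List V, l = m1 ++ v :: m2 ∧ v ∉ m2 ∧ ∀ u ∈ q, u ∈ m2 := by
  induction l with
  | nil => intro p q h; simp at h
  | cons b l ih =>
    intro p q h
    by_cases hb : b ∈ l
    · rw [List.dedup_cons_of_mem hb] at h
      obtain ⟨m1, m2, h1, h2, h3⟩ := ih _ _ h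
      exact ⟨b :: m1, m2, by rw [h1]; rfl, h2, h3⟩
    · rw [List.dedup_cons_of_notMem hb] at h
      cases p with
      | nil =>
        simp only [List.nil_append, List.cons.injEq] at h
        obtain ⟨rfl, hq⟩ := h
        exact ⟨[], l, rfl, hb, fun u hu => List.mem_dedup.mp (hq ▸ hu)⟩
      | cons c p =>
        simp only [List.cons_append, List.cons.injEq] at h
        obtain ⟨rfl, hd⟩ := h
        obtain ⟨m1, m2, h1, h2, h3⟩ := ih _ _ hd
        exact ⟨b :: m1, m2, by rw [h1]; rfl, h2, h3⟩

lemma legal_of' (a : V → V → ℕ) (l' : List V) :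
    ∀ y : V → ℕ, l'.Nodup →
    (∀ p v q, l' = p ++ v :: q → outDeg a v ≤ y v + ∑ u ∈ p.toFinset, a u v) →
    LegalGame a y l' := by
  induction l' with
  | nil => intros; trivial
  | cons v t ih =>
    intro y hnd hcond
    have h1 := hcond [] v t rfl
    simp only [List.toFinset_nil, Finset.sum_empty, add_zero] at h1
    refine ⟨h1, ih _ hnd.of_cons ?_⟩
    intro p w q hpq
    have hc := hcond (v :: p) w q (by rw [hpq]; rfl)
    have hvt : v ∉ t := (List.nodup_cons.mp hnd).1
    have hvp : v ∉ p := fun hv => hvt (hpq ▸ List.mem_append_left _ hv)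
    have hwt : w ∈ t := hpq ▸ List.mem_append_right _ List.mem_cons_self
    have hvw : w ≠ v := fun h => hvt (h ▸ hwt)
    rw [List.toFinset_cons, Finset.sum_insert (by simpa using hvp)] at hc
    have hf : fire a y v w = y w + a v w := by simp [fire, if_neg hvw]
    rw [hf]
    omega

/-- on a connected Eulerian loopless digraph, if at some point of a
legal game every vertex has already fired, then from the current distribution the
vertices can be legally fired once each in some order. -/
theorem stmt10 {V : Type*} [Fintype V] [DecidableEq V]
    (a : V → V → ℕ) (hloop : Loopless a) (hconn : WConnected a)
    (heul : EulerianD a) (x : V → ℕ)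
    (l : List V) (hl : LegalGame a x l) (hall : ∀ v : V, v ∈ l) :
    ∃ l' : List V, l'.Nodup ∧ (∀ v : V, v ∈ l') ∧ LegalGame a (run a x l) l' := by
  refine ⟨l.dedup, l.nodup_dedup, fun v => List.mem_dedup.mpr (hall v), ?_⟩
  apply legal_of' a _ _ l.nodup_dedup
  intro p v q hpq
  obtain ⟨m1, m2, hm, hvm, hqm⟩ := dedup_split' l v p q hpq
  have hy : run a x l v = run a (fire a (run a x m1) v) m2 v := by
    rw [hm, run_append']; rfl
  have h2 : ∑ u ∈ q.toFinset, a u v ≤ run a x l v := by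
    rw [hy, run_not_mem' a m2 v hvm]
    calc ∑ u ∈ q.toFinset, a u v
        ≤ ∑ u ∈ m2.toFinset, a u v := Finset.sum_le_sum_of_subset
          (fun u hu => List.mem_toFinset.mpr (hqm u (List.mem_toFinset.mp hu)))
      _ ≤ (m2.map (fun u => a u v)).sum := toFinset_sum_le' _ _
      _ ≤ _ := Nat.le_add_left _ _
  have hnd : (p ++ v :: q).Nodup := hpq ▸ l.nodup_dedup
  have hdeg : outDeg a v = ∑ u ∈ p.toFinset, a u v + ∑ u ∈ q.toFinset, a u v := by
    rw [heul v]
    have huniv : (l.dedup).toFinset = (Finset.univ : Finset V) := by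
      ext u; simp [List.mem_dedup, hall u]
    have h3 : inDeg a v = ∑ u ∈ (l.dedup).toFinset, a u v := by rw [huniv]; rfl
    rw [h3, hpq, List.toFinset_append, Finset.sum_union (by
      rw [List.disjoint_toFinset_iff_disjoint]
      exact (List.nodup_append'.mp hnd).2.2)]
    rw [List.toFinset_cons, Finset.sum_insert (by
      simpa using ((List.nodup_append'.mp hnd).2.1.notMem))]
    rw [hloop v]
    ring
  omega
end

section
/- Let G be a connected graph, f a divisor on G that lies under an acyclic orientation in the dual sense, i.e., its dual chip-distribution x = K⁺ - f (where K⁺(v) = d(v) - 1) satisfies x(v) ≤ d⁻_D(v) for some acyclic orientation D of G. Let K be the canonical divisor K(v) = d(v) - 2. Then rank(f) - rank(K - f) = deg(f) - |E(G)| + |V(G)|. -/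
/- Common definitions for chip-firing on multigraphs/digraphs.

A digraph (without a fixed vertex enumeration) on a finite vertex type `V`
is given by its arc-multiplicity function `a : V → V → ℕ` (`a u v` = number
of arcs from `u` to `v`).  An undirected multigraph is the special case of a
symmetric multiplicity function `d` (`d u v` = number of edges between `u`
and `v`); then `outDeg d v = ∑ u, d v u` is the degree of `v`, and
`∑ v, ∑ u, d v u = 2 |E|`. -/

variable {V : Type*} [Fintype V] [DecidableEq V]

/-! ### Auxiliary development for the proof -/

section RRAux

open Finset

lemma linEquiv_refl (d : V → V → ℕ) (f : V → ℤ) : LinEquiv d f f :=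
  ⟨0, fun v => by simp⟩

lemma linEquiv_trans {d : V → V → ℕ} {f g h : V → ℤ}
    (h1 : LinEquiv d f g) (h2 : LinEquiv d g h) : LinEquiv d f h := by
  obtain ⟨z1, hz1⟩ := h1
  obtain ⟨z2, hz2⟩ := h2
  refine ⟨z1 + z2, fun v => ?_⟩
  have e : ∑ u, (d v u : ℤ) * ((z1 + z2) u - (z1 + z2) v)
      = (∑ u, (d v u : ℤ) * (z1 u - z1 v)) + ∑ u, (d v u : ℤ) * (z2 u - z2 v) := by
    rw [← Finset.sum_add_distrib]
    exact Finset.sum_congr rfl fun u _ => by simp [Pi.add_apply]; ring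
  rw [hz2 v, hz1 v, e]; ring

lemma linEquiv_divDeg {d : V → V → ℕ} (hsym : ∀ u v, d u v = d v u) {f g : V → ℤ}
    (h : LinEquiv d f g) : divDeg g = divDeg f := by
  obtain ⟨z, hz⟩ := h
  have key : ∑ v, ∑ u, (d v u : ℤ) * (z u - z v) = 0 := by
    have h1 : ∑ v, ∑ u, (d v u : ℤ) * z u = ∑ v, ∑ u, (d v u : ℤ) * z v := by
      rw [Finset.sum_comm]
      exact Finset.sum_congr rfl fun v _ => Finset.sum_congr rfl fun u _ => by rw [hsym]
    have h2 : ∀ v : V, ∑ u, (d v u : ℤ) * (z u - z v)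
        = (∑ u, (d v u : ℤ) * z u) - ∑ u, (d v u : ℤ) * z v := by
      intro v; rw [← Finset.sum_sub_distrib]
      exact Finset.sum_congr rfl fun u _ => by ring
    calc ∑ v, ∑ u, (d v u : ℤ) * (z u - z v)
        = (∑ v, ∑ u, (d v u : ℤ) * z u) - ∑ v, ∑ u, (d v u : ℤ) * z v := by
          rw [← Finset.sum_sub_distrib]; exact Finset.sum_congr rfl fun v _ => h2 v
      _ = 0 := by rw [h1]; ring
  calc divDeg g = ∑ v, (f v + ∑ u, (d v u : ℤ) * (z u - z v)) :=
        Finset.sum_congr rfl fun v _ => hz v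
    _ = divDeg f + ∑ v, ∑ u, (d v u : ℤ) * (z u - z v) := Finset.sum_add_distrib
    _ = divDeg f := by rw [key, add_zero]

/-- Domination: if `c ≤ ν` pointwise and `ν` is unwinnable then so is `c`. -/
lemma unwinnable_of_le {d : V → V → ℕ} {c ν : V → ℤ} (hle : ∀ v, c v ≤ ν v)
    (hν : ¬ ∃ h : V → ℤ, Effective h ∧ LinEquiv d ν h) :
    ¬ ∃ h : V → ℤ, Effective h ∧ LinEquiv d c h := by
  rintro ⟨h, hh, z, hz⟩
  refine hν ⟨fun v => h v + (ν v - c v), fun v => ?_, ⟨z, fun v => ?_⟩⟩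
  · show 0 ≤ h v + (ν v - c v)
    have := hh v; have := hle v; linarith
  · show h v + (ν v - c v) = ν v + ∑ u, (d v u : ℤ) * (z u - z v)
    have := hz v; linarith

/-- Lemma A: for an acyclic orientation `a` of `d`, the divisor `indeg − 1`
is not equivalent to an effective divisor. -/
lemma nu_unwinnable [Nonempty V] {d a : V → V → ℕ} (hsym : ∀ u v, d u v = d v u)
    (hori : IsOrientation d a) (hacyc : AcyclicDigraph a) :
    ¬ ∃ h : V → ℤ, Effective h ∧ LinEquiv d (fun v => (inDeg a v : ℤ) - 1) h := by
  rintro ⟨h, hh, z, hz⟩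
  obtain ⟨v₁, -, hv₁⟩ := Finset.exists_max_image Finset.univ z ⟨Classical.arbitrary V,
    Finset.mem_univ _⟩
  haveI : IsTrans V (Relation.TransGen fun p q => 0 < a p q) :=
    ⟨fun _ _ _ => Relation.TransGen.trans⟩
  haveI : IsIrrefl V (Relation.TransGen fun p q => 0 < a p q) := ⟨hacyc⟩
  have hwf : WellFounded (Relation.TransGen fun p q => 0 < a p q) :=
    Finite.wellFounded_of_trans_of_irrefl _
  obtain ⟨v₀, hv₀S, hv₀min⟩ := hwf.has_min {u | z u = z v₁} ⟨v₁, rfl⟩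
  have hv₀ : z v₀ = z v₁ := hv₀S
  have hza : ∀ u, z u = z v₁ → a u v₀ = 0 := by
    intro u hu
    by_contra hne
    exact hv₀min u hu (Relation.TransGen.single (Nat.pos_of_ne_zero hne))
  set B : V → ℤ := fun u => if z u = z v₁ then 0 else (d v₀ u : ℤ) with hB
  have claim1 : (inDeg a v₀ : ℤ) ≤ ∑ u, B u := by
    rw [inDeg]
    push_cast
    refine Finset.sum_le_sum fun u _ => ?_
    by_cases hu : z u = z v₁
    · simp [hB, hu, hza u hu]
    · have : a u v₀ ≤ d u v₀ := by have := hori u v₀; omega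
      simp only [hB, if_neg hu]
      rw [hsym v₀ u]
      exact_mod_cast this
  have claim2 : ∑ u, (d v₀ u : ℤ) * (z u - z v₀) ≤ -∑ u, B u := by
    rw [← Finset.sum_neg_distrib]
    refine Finset.sum_le_sum fun u _ => ?_
    by_cases hu : z u = z v₁
    · simp [hB, hu, hv₀]
    · have h1 : z u ≤ z v₁ - 1 := by
        have := hv₁ u (Finset.mem_univ u); omega
      have h2 : z u - z v₀ ≤ -1 := by omega
      simp only [hB, if_neg hu]
      calc (d v₀ u : ℤ) * (z u - z v₀) ≤ (d v₀ u : ℤ) * (-1) := by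
            apply mul_le_mul_of_nonneg_left h2 (by positivity)
        _ = -(d v₀ u : ℤ) := by ring
  have h1 := hz v₀
  simp only at h1
  have h2 := hh v₀
  linarith


/-- Geometric sum identity over ℕ. -/
lemma geom_aux (C : ℕ) : ∀ t : ℕ, C * (∑ i ∈ Finset.range t, (C + 1) ^ i) + 1 = (C + 1) ^ t := by
  intro t
  induction t with
  | zero => simp
  | succ t ih => rw [Finset.sum_range_succ, Nat.mul_add, pow_succ, ← ih]; ring

/-- Strict decrease of the base-(C+1) encoded lexicographic measure. -/
lemma measure_lt {n C k : ℕ} {m m' : ℕ → ℕ} (hk : k < n)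
    (hle : ∀ j, j ≤ k → m' j ≤ m j) (hlt : m' k < m k) (hbd : ∀ j, m' j ≤ C) :
    ∑ j ∈ Finset.range n, m' j * (C + 1) ^ (n - 1 - j)
      < ∑ j ∈ Finset.range n, m j * (C + 1) ^ (n - 1 - j) := by
  have hsplit : ∀ f : ℕ → ℕ, ∑ j ∈ Finset.range n, f j
      = ∑ j ∈ Finset.range (k + 1), f j + ∑ j ∈ Finset.Ico (k + 1) n, f j := by
    intro f
    exact (Finset.sum_range_add_sum_Ico f hk).symm
  rw [hsplit (fun j => m' j * (C + 1) ^ (n - 1 - j)),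
    hsplit (fun j => m j * (C + 1) ^ (n - 1 - j))]
  have hA : ∑ j ∈ Finset.range (k + 1), m' j * (C + 1) ^ (n - 1 - j) + (C + 1) ^ (n - 1 - k)
      ≤ ∑ j ∈ Finset.range (k + 1), m j * (C + 1) ^ (n - 1 - j) := by
    rw [Finset.sum_range_succ, Finset.sum_range_succ]
    have h1 : ∑ j ∈ Finset.range k, m' j * (C + 1) ^ (n - 1 - j)
        ≤ ∑ j ∈ Finset.range k, m j * (C + 1) ^ (n - 1 - j) :=
      Finset.sum_le_sum fun j hj =>
        Nat.mul_le_mul_right _ (hle j (le_of_lt (Finset.mem_range.mp hj)))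
    have h2 : m' k * (C + 1) ^ (n - 1 - k) + (C + 1) ^ (n - 1 - k)
        ≤ m k * (C + 1) ^ (n - 1 - k) := by
      have : (m' k + 1) * (C + 1) ^ (n - 1 - k) ≤ m k * (C + 1) ^ (n - 1 - k) :=
        Nat.mul_le_mul_right _ hlt
      linarith
    linarith
  have hreindex : ∑ j ∈ Finset.Ico (k + 1) n, (C + 1) ^ (n - 1 - j)
      = ∑ i ∈ Finset.range (n - 1 - k), (C + 1) ^ i := by
    refine Finset.sum_nbij' (fun j => n - 1 - j) (fun i => n - 1 - i) ?_ ?_ ?_ ?_ ?_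
    · intro j hj
      simp only [Finset.mem_Ico] at hj
      simp only [Finset.mem_range]
      omega
    · intro i hi
      simp only [Finset.mem_range] at hi
      simp only [Finset.mem_Ico]
      omega
    · intro j hj
      simp only [Finset.mem_Ico] at hj
      show n - 1 - (n - 1 - j) = j
      omega
    · intro i hi
      simp only [Finset.mem_range] at hi
      show n - 1 - (n - 1 - i) = i
      omega
    · intro j _; rfl
  have hB : ∑ j ∈ Finset.Ico (k + 1) n, m' j * (C + 1) ^ (n - 1 - j) < (C + 1) ^ (n - 1 - k) := by
    calc ∑ j ∈ Finset.Ico (k + 1) n, m' j * (C + 1) ^ (n - 1 - j)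
        ≤ ∑ j ∈ Finset.Ico (k + 1) n, C * (C + 1) ^ (n - 1 - j) :=
          Finset.sum_le_sum fun j _ => Nat.mul_le_mul_right _ (hbd j)
      _ = C * ∑ j ∈ Finset.Ico (k + 1) n, (C + 1) ^ (n - 1 - j) := by
          rw [Finset.mul_sum]
      _ = C * ∑ i ∈ Finset.range (n - 1 - k), (C + 1) ^ i := by rw [hreindex]
      _ < (C + 1) ^ (n - 1 - k) := by
          have := geom_aux C (n - 1 - k); omega
  omega

/-- Step 1: consolidate all debt at `q`. -/
lemma step1 (d : V → V → ℕ) (q : V) (dist : V → ℕ)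
    (hP2 : ∀ v, v ≠ q → ∃ u, 0 < d v u ∧ dist u + 1 = dist v)
    (hP3 : ∀ v u, 0 < d v u → dist u ≤ dist v + 1)
    (hP4 : ∀ v, dist v < Fintype.card V) (h : V → ℤ) :
    ∃ c : V → ℤ, LinEquiv d h c ∧ ∀ v, v ≠ q → 0 ≤ c v := by
  classical
  set n := Fintype.card V with hn
  set D := ∑ v, outDeg d v with hD
  set H := 1 + ∑ v, (h v).natAbs with hH
  set W : ℕ → ℕ := fun j => ∑ i ∈ Finset.range j, H * (D + 1) ^ (n - i) with hWdef
  set z : V → ℤ := fun v => -(W (dist v) : ℤ) with hz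
  refine ⟨fun v => h v + ∑ u, (d v u : ℤ) * (z u - z v), ⟨z, fun v => rfl⟩, ?_⟩
  intro v hv
  show 0 ≤ h v + ∑ u, (d v u : ℤ) * (z u - z v)
  obtain ⟨u₀, hdu₀, hu₀⟩ := hP2 v hv
  set k := dist v with hkdef
  have hk1 : 1 ≤ k := by omega
  have hkn : k < n := hP4 v
  set Mk : ℕ := H * (D + 1) ^ (n - k) with hMk
  set Mk1 : ℕ := H * (D + 1) ^ (n - (k - 1)) with hMk1
  have hWsucc : ∀ j, W (j + 1) = W j + H * (D + 1) ^ (n - j) := by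
    intro j; simp only [hWdef]; exact Finset.sum_range_succ _ j
  have hWmono : ∀ i j, i ≤ j → W i ≤ W j := by
    intro i j hij; simp only [hWdef]
    exact Finset.sum_le_sum_of_subset (Finset.range_subset_range.mpr hij)
  have hdistu₀ : dist u₀ = k - 1 := by omega
  have hWk : (W k : ℤ) = (W (k - 1) : ℤ) + (Mk1 : ℤ) := by
    have h1 : W ((k - 1) + 1) = W (k - 1) + H * (D + 1) ^ (n - (k - 1)) := hWsucc (k - 1)
    have h2 : (k - 1) + 1 = k := by omega
    rw [h2] at h1
    rw [← hMk1] at h1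
    exact_mod_cast h1
  have hzu₀ : z u₀ - z v = (Mk1 : ℤ) := by
    simp only [hz, hdistu₀]
    rw [← hkdef]
    linarith [hWk]
  have hzlb : ∀ u, -((Mk : ℤ) * (d v u : ℤ)) ≤ (d v u : ℤ) * (z u - z v) := by
    intro u
    rcases Nat.eq_zero_or_pos (d v u) with h0 | hpos
    · simp [h0]
    · have hdist : dist u ≤ k + 1 := hP3 v u hpos
      have hWu : W (dist u) ≤ W k + H * (D + 1) ^ (n - k) := by
        have h1 := hWmono (dist u) (k + 1) hdist
        rw [hWsucc k] at h1
        exact h1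
      rw [← hMk] at hWu
      have hzb : -(Mk : ℤ) ≤ z u - z v := by
        simp only [hz]
        rw [← hkdef]
        omega
      calc -((Mk : ℤ) * (d v u : ℤ)) = (d v u : ℤ) * (-(Mk : ℤ)) := by ring
        _ ≤ (d v u : ℤ) * (z u - z v) := by
            apply mul_le_mul_of_nonneg_left hzb (by positivity)
  have hsum : (Mk1 : ℤ) - (Mk : ℤ) * (∑ u, (d v u : ℤ)) ≤ ∑ u, (d v u : ℤ) * (z u - z v) := by
    have h1 : ∀ u ∈ Finset.univ, 0 ≤ (d v u : ℤ) * (z u - z v) + (Mk : ℤ) * (d v u : ℤ) := by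
      intro u _; have := hzlb u; linarith
    have h2 : (Mk1 : ℤ) ≤ (d v u₀ : ℤ) * (z u₀ - z v) + (Mk : ℤ) * (d v u₀ : ℤ) := by
      rw [hzu₀]
      have hd1 : (1 : ℤ) ≤ (d v u₀ : ℤ) := by exact_mod_cast hdu₀
      nlinarith [Int.ofNat_nonneg Mk, Int.ofNat_nonneg Mk1]
    have h3 := Finset.single_le_sum h1 (Finset.mem_univ u₀)
    have h5 := h2.trans h3
    have h4 : ∑ u, ((d v u : ℤ) * (z u - z v) + (Mk : ℤ) * (d v u : ℤ))
        = (∑ u, (d v u : ℤ) * (z u - z v)) + (Mk : ℤ) * ∑ u, (d v u : ℤ) := by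
      rw [Finset.sum_add_distrib, Finset.mul_sum]
    rw [h4] at h5
    linarith
  have hDv : ∑ u, (d v u : ℤ) ≤ (D : ℤ) := by
    have h6 : outDeg d v ≤ D := by
      rw [hD]
      exact Finset.single_le_sum (fun u _ => Nat.zero_le _) (Finset.mem_univ v)
    have h7 : ∑ u, (d v u : ℤ) = ((outDeg d v : ℕ) : ℤ) := by rw [outDeg]; push_cast; ring
    rw [h7]; exact_mod_cast h6
  have hMk1eq : Mk1 = (D + 1) * Mk := by
    rw [hMk1, hMk]
    have h8 : n - (k - 1) = (n - k) + 1 := by omega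
    rw [h8, pow_succ]; ring
  have hHle : (H : ℤ) ≤ (Mk : ℤ) := by
    have h9 : H ≤ Mk := by
      rw [hMk]
      calc H = H * 1 := (mul_one H).symm
        _ ≤ H * (D + 1) ^ (n - k) := Nat.mul_le_mul_left H (Nat.one_le_pow _ _ (by omega))
    exact_mod_cast h9
  have hhH : 0 ≤ h v + (H : ℤ) := by
    have h6 : (h v).natAbs ≤ ∑ u, (h u).natAbs :=
      Finset.single_le_sum (f := fun u => (h u).natAbs) (fun u _ => Nat.zero_le _)
        (Finset.mem_univ v)
    omega
  have hfinal : (Mk : ℤ) ≤ (Mk1 : ℤ) - (Mk : ℤ) * ∑ u, (d v u : ℤ) := by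
    have h10 : (Mk : ℤ) * ∑ u, (d v u : ℤ) ≤ (Mk : ℤ) * (D : ℤ) :=
      mul_le_mul_of_nonneg_left hDv (by positivity)
    have h11 : (Mk1 : ℤ) = ((D : ℤ) + 1) * (Mk : ℤ) := by
      rw [hMk1eq]; push_cast; ring
    linarith
  linarith

/-- Step 2: reduce to a `q`-reduced divisor by legal set-firings. -/
lemma step2 (d : V → V → ℕ) (hsym : ∀ u v, d u v = d v u) (q : V) (dist : V → ℕ)
    (hP1 : dist q = 0)
    (hP2 : ∀ v, v ≠ q → ∃ u, 0 < d v u ∧ dist u + 1 = dist v)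
    (hP4 : ∀ v, dist v < Fintype.card V)
    (c : V → ℤ) (hc : ∀ v, v ≠ q → 0 ≤ c v) :
    ∃ c' : V → ℤ, LinEquiv d c c' ∧ (∀ v, v ≠ q → 0 ≤ c' v) ∧
      ∀ S : Finset V, q ∉ S → S.Nonempty → ∃ v ∈ S, c' v < ∑ u ∈ Sᶜ, (d v u : ℤ) := by
  classical
  set n := Fintype.card V with hn
  set C := (divDeg c - c q).toNat with hCdef
  set P : ℕ → (V → ℤ) → ℤ := fun j g => ∑ v ∈ Finset.univ.filter (fun v => dist v ≤ j), g v
    with hPdef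
  set μ : (V → ℤ) → ℕ :=
    fun g => ∑ j ∈ Finset.range n, (divDeg c - P j g).toNat * (C + 1) ^ (n - 1 - j) with hμdef
  suffices key : ∀ (N : ℕ) (c' : V → ℤ), LinEquiv d c c' → (∀ v, v ≠ q → 0 ≤ c' v) →
      c q ≤ c' q → μ c' ≤ N → ∃ c'' : V → ℤ, LinEquiv d c c'' ∧ (∀ v, v ≠ q → 0 ≤ c'' v) ∧
        ∀ S : Finset V, q ∉ S → S.Nonempty → ∃ v ∈ S, c'' v < ∑ u ∈ Sᶜ, (d v u : ℤ) by
    exact key (μ c) c (linEquiv_refl d c) hc le_rfl le_rfl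
  intro N
  induction N using Nat.strong_induction_on with
  | _ N IH =>
    intro c' hequiv hpos hq hμN
    by_cases hred : ∀ S : Finset V, q ∉ S → S.Nonempty → ∃ v ∈ S, c' v < ∑ u ∈ Sᶜ, (d v u : ℤ)
    · exact ⟨c', hequiv, hpos, hred⟩
    push_neg at hred
    obtain ⟨S, hqS, hSne, hS⟩ := hred
    set χ : V → ℤ := fun u => if u ∈ S then 1 else 0 with hχ
    set c₂ : V → ℤ := fun v => c' v + ∑ u, (d v u : ℤ) * (χ u - χ v) with hc₂
    have hequiv₂ : LinEquiv d c c₂ := linEquiv_trans hequiv ⟨χ, fun v => rfl⟩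
    have fact0 : ∀ v, v ∉ S → c₂ v = c' v + ∑ u ∈ S, (d v u : ℤ) := by
      intro v hvS
      have e : ∀ u, (d v u : ℤ) * (χ u - χ v) = if u ∈ S then (d v u : ℤ) else 0 := by
        intro u
        simp only [hχ, if_neg hvS]
        by_cases hu : u ∈ S <;> simp [hu]
      show c' v + ∑ u, (d v u : ℤ) * (χ u - χ v) = c' v + ∑ u ∈ S, (d v u : ℤ)
      rw [Finset.sum_congr rfl fun u _ => e u, Finset.sum_ite_mem, Finset.univ_inter]
    have fact1 : ∀ v, v ∈ S → c₂ v = c' v - ∑ u ∈ Sᶜ, (d v u : ℤ) := by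
      intro v hvS
      have e : ∀ u, (d v u : ℤ) * (χ u - χ v) = if u ∈ Sᶜ then -(d v u : ℤ) else 0 := by
        intro u
        simp only [hχ, if_pos hvS, Finset.mem_compl]
        by_cases hu : u ∈ S <;> simp [hu]
      show c' v + ∑ u, (d v u : ℤ) * (χ u - χ v) = c' v - ∑ u ∈ Sᶜ, (d v u : ℤ)
      rw [Finset.sum_congr rfl fun u _ => e u, Finset.sum_ite_mem, Finset.univ_inter,
        Finset.sum_neg_distrib]
      ring
    have hpos₂ : ∀ v, v ≠ q → 0 ≤ c₂ v := by
      intro v hv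
      by_cases hvS : v ∈ S
      · rw [fact1 v hvS]; have := hS v hvS; linarith
      · rw [fact0 v hvS]
        have h1 : (0 : ℤ) ≤ ∑ u ∈ S, (d v u : ℤ) := Finset.sum_nonneg fun u _ => by positivity
        have := hpos v hv; linarith
    have hq₂ : c q ≤ c₂ q := by
      rw [fact0 q hqS]
      have h1 : (0 : ℤ) ≤ ∑ u ∈ S, (d q u : ℤ) := Finset.sum_nonneg fun u _ => by positivity
      linarith
    obtain ⟨v₀, hv₀S, hv₀min⟩ := S.exists_min_image dist hSne
    have hv₀q : v₀ ≠ q := fun h => hqS (h ▸ hv₀S)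
    obtain ⟨u₀, hdu₀, hu₀dist⟩ := hP2 v₀ hv₀q
    set k := dist u₀ with hk
    have hkv₀ : dist v₀ = k + 1 := hu₀dist.symm
    have hu₀S : u₀ ∉ S := fun h => by have := hv₀min u₀ h; omega
    have hkn : k < n := by have := hP4 v₀; omega
    have hdeg' : divDeg c' = divDeg c := linEquiv_divDeg hsym hequiv
    have hdeg₂ : divDeg c₂ = divDeg c := linEquiv_divDeg hsym hequiv₂
    have hTnoS : ∀ j, j ≤ k → ∀ w ∈ Finset.univ.filter (fun v => dist v ≤ j), w ∉ S := by
      intro j hj w hw hwS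
      simp only [Finset.mem_filter] at hw
      have := hv₀min w hwS
      omega
    have hPle : ∀ j, j ≤ k → P j c' ≤ P j c₂ := by
      intro j hj
      apply Finset.sum_le_sum
      intro w hw
      rw [fact0 w (hTnoS j hj w hw)]
      have h1 : (0 : ℤ) ≤ ∑ u ∈ S, (d w u : ℤ) := Finset.sum_nonneg fun u _ => by positivity
      linarith
    have hPk : P k c' + 1 ≤ P k c₂ := by
      have hu₀T : u₀ ∈ Finset.univ.filter (fun v => dist v ≤ k) := by
        simp only [Finset.mem_filter]
        exact ⟨Finset.mem_univ _, le_refl k⟩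
      have hdiff : ∀ w ∈ Finset.univ.filter (fun v => dist v ≤ k), 0 ≤ c₂ w - c' w := by
        intro w hw
        rw [fact0 w (hTnoS k le_rfl w hw)]
        have h1 : (0 : ℤ) ≤ ∑ u ∈ S, (d w u : ℤ) := Finset.sum_nonneg fun u _ => by positivity
        linarith
      have h2 : (1 : ℤ) ≤ c₂ u₀ - c' u₀ := by
        rw [fact0 u₀ hu₀S]
        have h3 : (d u₀ v₀ : ℤ) ≤ ∑ u ∈ S, (d u₀ u : ℤ) :=
          Finset.single_le_sum (f := fun u => (d u₀ u : ℤ)) (fun u _ => by positivity) hv₀S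
        have h4 : (1 : ℤ) ≤ (d u₀ v₀ : ℤ) := by
          rw [hsym u₀ v₀]; exact_mod_cast hdu₀
        linarith
      have h5 := Finset.single_le_sum (f := fun w => c₂ w - c' w) hdiff hu₀T
      have h6 : ∑ w ∈ Finset.univ.filter (fun v => dist v ≤ k), (c₂ w - c' w)
          = P k c₂ - P k c' := by
        simp only [hPdef]
        rw [Finset.sum_sub_distrib]
      rw [h6] at h5
      have h5' : c₂ u₀ - c' u₀ ≤ P k c₂ - P k c' := h5
      linarith
    have hble : ∀ (g : V → ℤ), (∀ v, v ≠ q → 0 ≤ g v) → c q ≤ g q → ∀ j, c q ≤ P j g := by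
      intro g hg hgq j
      have hqT : q ∈ Finset.univ.filter (fun v => dist v ≤ j) := by
        simp [hP1]
      have h7 : (0 : ℤ) ≤ ∑ w ∈ (Finset.univ.filter (fun v => dist v ≤ j)).erase q, g w := by
        apply Finset.sum_nonneg
        intro w hw
        exact hg w (Finset.ne_of_mem_erase hw)
      have h8 := Finset.add_sum_erase _ g hqT
      simp only [hPdef]
      linarith
    have hmain : μ c₂ < μ c' := by
      simp only [hμdef]
      refine measure_lt (n := n) (C := C) (k := k)
        (m := fun j => (divDeg c - P j c').toNat)
        (m' := fun j => (divDeg c - P j c₂).toNat) hkn ?_ ?_ ?_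
      · intro j hj
        show (divDeg c - P j c₂).toNat ≤ (divDeg c - P j c').toNat
        have := hPle j hj
        omega
      · have h9 : P k c' + 1 ≤ divDeg c := by
          have h10 := Finset.sum_filter_add_sum_filter_not Finset.univ
            (fun v => dist v ≤ k) c'
          have hv₀T : v₀ ∈ Finset.univ.filter (fun v => ¬ dist v ≤ k) := by
            simp [hkv₀]
          have h11 : ∀ w ∈ Finset.univ.filter (fun v => ¬ dist v ≤ k), 0 ≤ c' w := by
            intro w hw
            simp only [Finset.mem_filter] at hw
            refine hpos w ?_
            intro hwq
            rw [hwq, hP1] at hw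
            omega
          have h12 := Finset.single_le_sum (f := c') h11 hv₀T
          have h13 : (1 : ℤ) ≤ c' v₀ := by
            have h14 := hS v₀ hv₀S
            have h15 : (d v₀ u₀ : ℤ) ≤ ∑ u ∈ Sᶜ, (d v₀ u : ℤ) :=
              Finset.single_le_sum (f := fun u => (d v₀ u : ℤ)) (fun u _ => by positivity)
                (Finset.mem_compl.mpr hu₀S)
            have h16 : (1 : ℤ) ≤ (d v₀ u₀ : ℤ) := by exact_mod_cast hdu₀
            linarith
          have h17 : P k c' + ∑ w ∈ Finset.univ.filter (fun v => ¬ dist v ≤ k), c' w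
              = divDeg c := by
            simp only [hPdef]
            rw [h10]
            exact hdeg'
          linarith
        show (divDeg c - P k c₂).toNat < (divDeg c - P k c').toNat
        have := hPk
        omega
      · intro j
        show (divDeg c - P j c₂).toNat ≤ C
        have h18 := hble c₂ hpos₂ hq₂ j
        have h19 : C = (divDeg c - c q).toNat := hCdef
        omega
    exact IH (μ c₂) (lt_of_lt_of_le hmain hμN) c₂ hequiv₂ hpos₂ hq₂ le_rfl

/-- Lemma B: burning bound for reduced divisors. -/
lemma burn_bound (d : V → V → ℕ) (hsym : ∀ u v, d u v = d v u) (hloop : Loopless d)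
    (c : V → ℤ) :
    ∀ S : Finset V, (∀ T ⊆ S, T.Nonempty → ∃ v ∈ T, c v < ∑ u ∈ Tᶜ, (d v u : ℤ)) →
      2 * ∑ v ∈ S, c v + 2 * S.card ≤
        2 * ∑ v ∈ S, ∑ u, (d v u : ℤ) - ∑ v ∈ S, ∑ u ∈ S, (d v u : ℤ) := by
  intro S
  induction S using Finset.strongInduction with
  | _ S IH =>
    intro hred
    rcases S.eq_empty_or_nonempty with rfl | hSne
    · simp
    · obtain ⟨v, hvS, hv⟩ := hred S (subset_refl S) hSne
      have hIH := IH (S.erase v) (Finset.erase_ssubset hvS)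
        (fun T hT hTne => hred T (hT.trans (Finset.erase_subset _ _)) hTne)
      have e1 : ∑ w ∈ S, c w = c v + ∑ w ∈ S.erase v, c w := (Finset.add_sum_erase S c hvS).symm
      have e2 : (S.card : ℤ) = ((S.erase v).card : ℤ) + 1 := by
        rw [Finset.card_erase_of_mem hvS]
        have : 1 ≤ S.card := Finset.card_pos.mpr hSne
        push_cast [Nat.cast_sub this]
        ring
      have e3 : ∑ w ∈ S, ∑ u, (d w u : ℤ)
          = (∑ u, (d v u : ℤ)) + ∑ w ∈ S.erase v, ∑ u, (d w u : ℤ) :=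
        (Finset.add_sum_erase S _ hvS).symm
      have i4 : (d v v : ℤ) = 0 := by exact_mod_cast hloop v
      have e4 : ∑ w ∈ S, ∑ u ∈ S, (d w u : ℤ)
          = 2 * (∑ u ∈ S.erase v, (d v u : ℤ))
            + ∑ w ∈ S.erase v, ∑ u ∈ S.erase v, (d w u : ℤ) := by
        calc ∑ w ∈ S, ∑ u ∈ S, (d w u : ℤ)
            = (∑ u ∈ S, (d v u : ℤ)) + ∑ w ∈ S.erase v, ∑ u ∈ S, (d w u : ℤ) :=
              (Finset.add_sum_erase _ _ hvS).symm
          _ = ((d v v : ℤ) + ∑ u ∈ S.erase v, (d v u : ℤ))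
              + ∑ w ∈ S.erase v, ((d w v : ℤ) + ∑ u ∈ S.erase v, (d w u : ℤ)) := by
              congr 1
              · exact (Finset.add_sum_erase S _ hvS).symm
              · exact Finset.sum_congr rfl fun w _ => (Finset.add_sum_erase S _ hvS).symm
          _ = 2 * (∑ u ∈ S.erase v, (d v u : ℤ))
              + ∑ w ∈ S.erase v, ∑ u ∈ S.erase v, (d w u : ℤ) := by
              rw [Finset.sum_add_distrib]
              have i3 : ∑ w ∈ S.erase v, (d w v : ℤ) = ∑ w ∈ S.erase v, (d v w : ℤ) :=
                Finset.sum_congr rfl fun w _ => by rw [hsym]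
              rw [i3, i4]; ring
      have hcompl : ∑ u ∈ Sᶜ, (d v u : ℤ)
          = (∑ u, (d v u : ℤ)) - (∑ u ∈ S.erase v, (d v u : ℤ)) := by
        have i5 := Finset.sum_compl_add_sum S (fun u => (d v u : ℤ))
        have i6 : ∑ u ∈ S, (d v u : ℤ) = (d v v : ℤ) + ∑ u ∈ S.erase v, (d v u : ℤ) :=
          (Finset.add_sum_erase S _ hvS).symm
        rw [i6, i4] at i5
        linarith
      rw [hcompl] at hv
      rw [e1, e3, e4, e2]
      linarith

/-- Existence of a graph-distance function from `q` with the needed properties. -/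
lemma exists_dist (d : V → V → ℕ) (hsym : ∀ u v, d u v = d v u) (hloop : Loopless d)
    (hconn : UConnected d) (q : V) :
    ∃ dist : V → ℕ, dist q = 0 ∧ (∀ v, v ≠ q → ∃ u, 0 < d v u ∧ dist u + 1 = dist v) ∧
      (∀ v u, 0 < d v u → dist u ≤ dist v + 1) ∧ (∀ v, dist v < Fintype.card V) := by
  classical
  let G : SimpleGraph V :=
    { Adj := fun u v => 0 < d u v ∧ u ≠ v
      symm := by constructor; intro u v hu; exact ⟨by rw [hsym v u]; exact hu.1, hu.2.symm⟩
      loopless := ⟨fun v hv => hv.2 rfl⟩ }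
  have hadj : ∀ u v, 0 < d u v → G.Adj u v := by
    intro u v h
    refine ⟨h, ?_⟩
    rintro rfl
    rw [hloop u] at h; exact lt_irrefl 0 h
  have hreach : ∀ u v, G.Reachable u v := by
    intro u v
    rw [SimpleGraph.reachable_iff_reflTransGen]
    exact Relation.ReflTransGen.mono (fun p r hpr => hadj p r hpr) u v (hconn u v)
  haveI : Nonempty V := ⟨q⟩
  have hGconn : G.Connected := ⟨hreach⟩
  refine ⟨fun v => G.dist q v, SimpleGraph.dist_self, ?_, ?_, ?_⟩
  · intro v hv
    obtain ⟨p, hp⟩ := (hreach v q).exists_walk_length_eq_dist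
    cases p with
    | nil => exact absurd rfl hv
    | @cons _ x _ hadj' p' =>
      refine ⟨x, hadj'.1, ?_⟩
      show G.dist q x + 1 = G.dist q v
      have h1 : G.dist q x ≤ p'.length := by
        rw [SimpleGraph.dist_comm]
        exact SimpleGraph.dist_le p'
      have h2 : G.dist q v ≤ G.dist q x + 1 := by
        have h3 := hGconn.dist_triangle (u := q) (v := x) (w := v)
        have h4 : G.dist x v ≤ 1 := by
          have := SimpleGraph.dist_le (SimpleGraph.Walk.cons hadj'.symm SimpleGraph.Walk.nil)
          simpa using this
        omega
      rw [SimpleGraph.Walk.length_cons] at hp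
      have h5 : G.dist v q = G.dist q v := SimpleGraph.dist_comm
      omega
  · intro v u hdu
    show G.dist q u ≤ G.dist q v + 1
    have h3 := hGconn.dist_triangle (u := q) (v := v) (w := u)
    have hd1 : G.dist v u ≤ 1 := by
      have := SimpleGraph.dist_le (SimpleGraph.Walk.cons (hadj v u hdu) SimpleGraph.Walk.nil)
      simpa using this
    omega
  · intro v
    show G.dist q v < Fintype.card V
    obtain ⟨p, hp⟩ := (hreach q v).exists_walk_length_eq_dist
    have hpath := SimpleGraph.Walk.isPath_of_length_eq_dist p hp
    have := hpath.length_lt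
    omega

/-- Riemann inequality: a divisor of degree `> e - n` is winnable. -/
theorem riemann_ineq (d : V → V → ℕ) (hsym : ∀ u v, d u v = d v u) (hloop : Loopless d)
    (hconn : UConnected d) [Nonempty V] (h : V → ℤ)
    (hdeg : ∑ v, ∑ u, (d v u : ℤ) < 2 * divDeg h + 2 * Fintype.card V) :
    ∃ h' : V → ℤ, Effective h' ∧ LinEquiv d h h' := by
  classical
  obtain ⟨q⟩ := (inferInstance : Nonempty V)
  obtain ⟨dist, hP1, hP2, hP3, hP4⟩ := exists_dist d hsym hloop hconn q
  obtain ⟨c, hhc, hcpos⟩ := step1 d q dist hP2 hP3 hP4 h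
  obtain ⟨c', hcc', hc'pos, hred⟩ := step2 d hsym q dist hP1 hP2 hP4 c hcpos
  have hequiv : LinEquiv d h c' := linEquiv_trans hhc hcc'
  have hdegc : divDeg c' = divDeg h := linEquiv_divDeg hsym hequiv
  have hburn := burn_bound d hsym hloop c' (Finset.univ.erase q)
    (fun T hT hTne => hred T (fun hqT => (Finset.ne_of_mem_erase (hT hqT)) rfl) hTne)
  have e0 : (d q q : ℤ) = 0 := by exact_mod_cast hloop q
  have e1 : ∑ v ∈ Finset.univ.erase q, ∑ u, (d v u : ℤ)
      = (∑ v, ∑ u, (d v u : ℤ)) - ∑ u, (d q u : ℤ) := by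
    have := Finset.add_sum_erase Finset.univ (fun v => ∑ u, (d v u : ℤ)) (Finset.mem_univ q)
    linarith
  have e2inner : ∀ v, ∑ u ∈ Finset.univ.erase q, (d v u : ℤ)
      = (∑ u, (d v u : ℤ)) - (d v q : ℤ) := by
    intro v
    have := Finset.add_sum_erase Finset.univ (fun u => (d v u : ℤ)) (Finset.mem_univ q)
    linarith
  have e2 : ∑ v ∈ Finset.univ.erase q, ∑ u ∈ Finset.univ.erase q, (d v u : ℤ)
      = (∑ v, ∑ u, (d v u : ℤ)) - ∑ u, (d q u : ℤ) - ∑ v ∈ Finset.univ.erase q, (d v q : ℤ) := by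
    rw [Finset.sum_congr rfl fun v _ => e2inner v, Finset.sum_sub_distrib, e1]
  have e3 : ∑ v ∈ Finset.univ.erase q, (d v q : ℤ) = ∑ u, (d q u : ℤ) := by
    have h1 := Finset.add_sum_erase Finset.univ (fun v => (d v q : ℤ)) (Finset.mem_univ q)
    have h2 : ∑ v, (d v q : ℤ) = ∑ v, (d q v : ℤ) :=
      Finset.sum_congr rfl fun v _ => by rw [hsym]
    rw [e0] at h1
    linarith
  have ecard : (((Finset.univ.erase q).card : ℕ) : ℤ) = (Fintype.card V : ℤ) - 1 := by
    rw [Finset.card_erase_of_mem (Finset.mem_univ q), Finset.card_univ]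
    have h3 : 1 ≤ Fintype.card V := Fintype.card_pos
    push_cast [Nat.cast_sub h3]
    ring
  have edeg : divDeg c' = c' q + ∑ v ∈ Finset.univ.erase q, c' v := by
    have := Finset.add_sum_erase Finset.univ c' (Finset.mem_univ q)
    rw [divDeg]; linarith
  rw [e1, e2, e3, ecard] at hburn
  have hq' : 0 ≤ c' q := by
    have h4 : -2 < 2 * c' q := by linarith
    omega
  refine ⟨c', ?_, hequiv⟩
  intro v
  by_cases hv : v = q
  · rw [hv]; exact hq'
  · exact hc'pos v hv

end RRAux

/-- Riemann–Roch in a special case: if the dual chip-distribution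
`x = K⁺ - f` of the divisor `f` lies under an acyclic orientation, then
`rank(f) - rank(K - f) = deg(f) - |E(G)| + |V(G)|`. -/
theorem stmt14 {V : Type*} [Fintype V] [DecidableEq V]
    (d : V → V → ℕ) (hsym : ∀ u v, d u v = d v u) (hloop : Loopless d)
    (hconn : UConnected d) (f : V → ℤ)
    (a : V → V → ℕ) (hori : IsOrientation d a) (hacyc : AcyclicDigraph a)
    (hchip : ∀ v, 0 ≤ (outDeg d v : ℤ) - 1 - f v)
    (hunder : ∀ v, (outDeg d v : ℤ) - 1 - f v ≤ (inDeg a v : ℤ))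
    (r s : ℤ) (hr : IsRank d f r)
    (hs : IsRank d (fun v => ((outDeg d v : ℤ) - 2) - f v) s)
    (e : ℤ) (he : 2 * e = ∑ v, ∑ u, (d v u : ℤ)) :
    r - s = divDeg f - e + Fintype.card V := by
  classical
  rcases isEmpty_or_nonempty V with hempty | hne
  · exfalso
    obtain ⟨g, hgeff, hgunw, hm⟩ := hr.1
    exact hgunw ⟨fun _ => 0, fun v => le_refl 0, ⟨0, fun v => isEmptyElim v⟩⟩
  -- basic sum identities
  have hsum_a : 2 * ∑ v, ∑ u, (a v u : ℤ) = ∑ v, ∑ u, (d v u : ℤ) := by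
    have h1 : ∑ v, ∑ u, (a u v : ℤ) = ∑ v, ∑ u, (a v u : ℤ) := Finset.sum_comm
    have h2 : ∀ v u : V, (d v u : ℤ) = (a v u : ℤ) + (a u v : ℤ) := by
      intro v u; exact_mod_cast (hori v u).symm
    calc 2 * ∑ v, ∑ u, (a v u : ℤ)
        = (∑ v, ∑ u, (a v u : ℤ)) + ∑ v, ∑ u, (a u v : ℤ) := by rw [h1]; ring
      _ = ∑ v, ∑ u, ((a v u : ℤ) + (a u v : ℤ)) := by
          rw [← Finset.sum_add_distrib]
          exact Finset.sum_congr rfl fun v _ => by rw [← Finset.sum_add_distrib]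
      _ = ∑ v, ∑ u, (d v u : ℤ) :=
          Finset.sum_congr rfl fun v _ => Finset.sum_congr rfl fun u _ => (h2 v u).symm
  have he_a : ∑ v, ∑ u, (a v u : ℤ) = e := by linarith
  have hout : ∀ v, (outDeg d v : ℤ) = (outDeg a v : ℤ) + (inDeg a v : ℤ) := by
    intro v
    rw [outDeg, outDeg, inDeg]
    push_cast
    rw [← Finset.sum_add_distrib]
    exact Finset.sum_congr rfl fun u _ => by exact_mod_cast (hori v u).symm
  -- the value of s
  have hsval : s = -1 := by
    refine hs.unique ⟨⟨fun _ => 0, fun v => le_refl 0, ?_, by simp [divDeg]⟩, ?_⟩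
    · refine unwinnable_of_le (ν := fun v => (inDeg a v : ℤ) - 1) (fun v => ?_)
        (nu_unwinnable hsym hori hacyc)
      have := hunder v
      show ((outDeg d v : ℤ) - 2 - f v) - 0 ≤ (inDeg a v : ℤ) - 1
      linarith
    · rintro m ⟨g, hg, -, rfl⟩
      have h3 : 0 ≤ divDeg g := Finset.sum_nonneg fun v _ => hg v
      linarith
  -- the value of r
  have hrval : r = divDeg f - e + (Fintype.card V : ℤ) - 1 := by
    refine hr.unique ⟨?_, ?_⟩
    · -- membership: explicit effective divisor g
      refine ⟨fun v => f v + 1 + (inDeg a v : ℤ) - (outDeg d v : ℤ), fun v => ?_, ?_, ?_⟩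
      · have := hunder v
        show (0 : ℤ) ≤ f v + 1 + (inDeg a v : ℤ) - (outDeg d v : ℤ)
        linarith
      · -- unwinnability via the reversed orientation
        have hrev_ori : IsOrientation d (fun u v => a v u) := by
          intro u v
          show a v u + a u v = d u v
          have := hori u v; omega
        have hrev_acyc : AcyclicDigraph (fun u v => a v u) := by
          intro v hv
          exact hacyc v ((Relation.transGen_swap (r := fun p q => 0 < a p q)).mp hv)
        have hnu := nu_unwinnable hsym hrev_ori hrev_acyc
        refine unwinnable_of_le (ν := fun v => (inDeg (fun u v => a v u) v : ℤ) - 1)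
          (fun v => ?_) hnu
        show f v - (f v + 1 + (inDeg a v : ℤ) - (outDeg d v : ℤ))
            ≤ (inDeg (fun u v => a v u) v : ℤ) - 1
        have h4 : inDeg (fun u v => a v u) v = outDeg a v := rfl
        rw [h4]
        have := hout v
        linarith
      · -- degree computation
        have hsum1 : ∑ v, (inDeg a v : ℤ) = ∑ v, ∑ u, (a v u : ℤ) := by
          simp only [inDeg]
          push_cast
          exact Finset.sum_comm
        have hsum2 : ∑ v, (outDeg d v : ℤ) = ∑ v, ∑ u, (d v u : ℤ) := by
          simp only [outDeg]
          push_cast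
          rfl
        have h5 : divDeg (fun v => f v + 1 + (inDeg a v : ℤ) - (outDeg d v : ℤ))
            = divDeg f + (Fintype.card V : ℤ) + (∑ v, (inDeg a v : ℤ))
              - ∑ v, (outDeg d v : ℤ) := by
          rw [divDeg, divDeg, Finset.sum_sub_distrib, Finset.sum_add_distrib,
            Finset.sum_add_distrib, Finset.sum_const, Finset.card_univ]
          push_cast
          ring
        rw [h5, hsum1, hsum2, he_a, ← he]
        ring
    · -- lower bound via the Riemann inequality
      rintro m ⟨g, hg, hunw, rfl⟩
      by_contra hlt
      push_neg at hlt
      refine hunw (riemann_ineq d hsym hloop hconn (fun v => f v - g v) ?_)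
      have h6 : divDeg (fun v => f v - g v) = divDeg f - divDeg g := by
        rw [divDeg, divDeg, divDeg, Finset.sum_sub_distrib]
      rw [h6, ← he]
      have h7 : divDeg g - 1 < divDeg f - e + (Fintype.card V : ℤ) - 1 := hlt
      linarith
  rw [hrval, hsval]
  ring
end

section
/- Let G be a connected graph and f a divisor on G with f(v) ≤ d(v) - 1 for every vertex v. Let x = K⁺ - f be its dual chip-distribution, where K⁺(v) = d(v) - 1. Then rank(f) = dist(x) - 1, where dist(x) is the minimum number of chips to add to x to obtain a non-terminating distribution. -/
/- Common definitions for chip-firing on multigraphs/digraphs.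

A digraph (without a fixed vertex enumeration) on a finite vertex type `V`
is given by its arc-multiplicity function `a : V → V → ℕ` (`a u v` = number
of arcs from `u` to `v`).  An undirected multigraph is the special case of a
symmetric multiplicity function `d` (`d u v` = number of edges between `u`
and `v`); then `outDeg d v = ∑ u, d v u` is the degree of `v`, and
`∑ v, ∑ u, d v u = 2 |E|`. -/

variable {V : Type*} [Fintype V] [DecidableEq V]

section Stmt15Aux

lemma fire_cast' (d : V → V → ℕ) (w : V → ℕ) (v : V) (hv : outDeg d v ≤ w v) (u : V) :
    (fire d w v u : ℤ) = (w u : ℤ) + d v u - (if u = v then (outDeg d v : ℤ) else 0) := by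
  unfold fire
  by_cases h : u = v
  · subst h
    have h2 : outDeg d u ≤ w u + d u u := le_trans hv (Nat.le_add_right _ _)
    simp only [if_pos rfl, eq_self_iff_true, if_true]
    omega
  · simp [h]

lemma run_count' (d : V → V → ℕ) :
    ∀ (l : List V) (w : V → ℕ), LegalGame d w l → ∀ v,
      (run d w l v : ℤ) = (w v : ℤ) + ∑ u, (d u v : ℤ) * l.count u
        - (outDeg d v : ℤ) * l.count v := by
  intro l
  induction l with
  | nil => intro w _ v; simp [run]
  | cons v₀ l ih =>
    intro w hleg v
    obtain ⟨h1, h2⟩ := hleg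
    have hr := ih (fire d w v₀) h2 v
    rw [show run d w (v₀ :: l) = run d (fire d w v₀) l from rfl, hr,
      fire_cast' d w v₀ h1 v]
    have key : ∀ u : V, ((v₀ :: l).count u : ℤ)
        = (l.count u : ℤ) + if u = v₀ then 1 else 0 := by
      intro u
      rcases eq_or_ne u v₀ with h | h <;> simp [List.count_cons, h] <;> exact Ne.symm h
    simp only [key]
    simp only [mul_add, Finset.sum_add_distrib, mul_ite, mul_one, mul_zero,
      Finset.sum_ite_eq', Finset.mem_univ, if_true]
    rcases eq_or_ne v v₀ with h | h
    · subst h; simp; ring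
    · simp [h]; ring

lemma greedy' (d : V → V → ℕ) :
    ∀ (k : ℕ) (w z : V → ℕ), (∑ v, z v) ≤ k →
      (∀ v, (w v : ℤ) + ∑ u, (d u v : ℤ) * z u - (outDeg d v : ℤ) * z v
        < outDeg d v) →
      Terminates d w := by
  intro k
  induction k with
  | zero =>
    intro w z hz hb
    have hz0 : ∀ v, z v = 0 := fun v =>
      (Finset.sum_eq_zero_iff.mp (Nat.le_zero.mp hz)) v (Finset.mem_univ v)
    refine ⟨[], trivial, fun v => ?_⟩
    have hb' := hb v
    simp [hz0] at hb'
    exact_mod_cast hb'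
  | succ k ih =>
    intro w z hz hb
    by_cases hst : ∀ v, w v < outDeg d v
    · exact ⟨[], trivial, hst⟩
    push_neg at hst
    obtain ⟨v, hv⟩ := hst
    have hzv : 1 ≤ z v := by
      by_contra h
      have h0 : z v = 0 := by omega
      have hb' := hb v
      rw [h0] at hb'
      have hnn : (0:ℤ) ≤ ∑ u, (d u v : ℤ) * z u :=
        Finset.sum_nonneg fun u _ => by positivity
      have hcv : (outDeg d v : ℤ) ≤ w v := by exact_mod_cast hv
      simp at hb'
      linarith
    set z' : V → ℕ := fun u => z u - (if u = v then 1 else 0) with hz'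
    have hzsplit : ∀ u, z u = z' u + (if u = v then 1 else 0) := by
      intro u; rcases eq_or_ne u v with h | h <;> simp [hz', h] <;> omega
    have hsum : ∑ u, z' u ≤ k := by
      have hsz : ∑ u, z u = (∑ u, z' u) + 1 := by
        calc ∑ u, z u = ∑ u, (z' u + if u = v then 1 else 0) :=
              Finset.sum_congr rfl (fun u _ => hzsplit u)
        _ = (∑ u, z' u) + 1 := by
              rw [Finset.sum_add_distrib]; simp
      omega
    have hcast : ∀ t, (z' t : ℤ) = (z t : ℤ) - (if t = v then 1 else 0) := by
      intro t
      rcases eq_or_ne t v with h | h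
      · subst h; simp [hz']; omega
      · simp [hz', h]
    have hb' : ∀ u, (fire d w v u : ℤ) + ∑ t, (d t u : ℤ) * z' t
        - (outDeg d u : ℤ) * z' u < outDeg d u := by
      intro u
      rw [fire_cast' d w v hv u]
      simp only [hcast]
      simp only [mul_sub, Finset.sum_sub_distrib, mul_ite, mul_one, mul_zero,
        Finset.sum_ite_eq', Finset.mem_univ, if_true]
      have hb'' := hb u
      rcases eq_or_ne u v with h | h
      · subst h; simp; linarith
      · simp [h]; linarith
    obtain ⟨l, hleg, hend⟩ := ih (fire d w v) z' hsum hb'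
    exact ⟨v :: l, ⟨hv, hleg⟩, hend⟩

lemma lap_eq' (d : V → V → ℕ) (hsym : ∀ u v, d u v = d v u) (zz : V → ℤ) (v : V) :
    ∑ u, (d v u : ℤ) * (zz u - zz v)
      = (∑ u, (d u v : ℤ) * zz u) - (outDeg d v : ℤ) * zz v := by
  have hdeg : (outDeg d v : ℤ) = ∑ u, (d v u : ℤ) := by
    unfold outDeg; push_cast; ring
  rw [hdeg, Finset.sum_mul, ← Finset.sum_sub_distrib]
  refine Finset.sum_congr rfl fun u _ => ?_
  rw [hsym u v]; ring

lemma terminates_iff' (d : V → V → ℕ) (hsym : ∀ u v, d u v = d v u) (w : V → ℕ) :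
    Terminates d w ↔ ∃ h : V → ℤ, Effective h ∧
      LinEquiv d (fun v => (outDeg d v : ℤ) - 1 - w v) h := by
  constructor
  · rintro ⟨l, hleg, hend⟩
    refine ⟨fun v => (outDeg d v : ℤ) - 1 - run d w l v, fun v => ?_,
      fun u => -(l.count u), fun v => ?_⟩
    · have := hend v; simp only; omega
    · simp only
      rw [run_count' d l w hleg v, lap_eq' d hsym]
      simp only [mul_neg, Finset.sum_neg_distrib]
      ring
  · rintro ⟨h, heff, z, hz⟩
    cases isEmpty_or_nonempty V with
    | inl hV => exact ⟨[], trivial, fun v => (IsEmpty.false v).elim⟩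
    | inr hV =>
      obtain ⟨v₁, -, hmax⟩ := Finset.exists_max_image Finset.univ z
        ⟨Classical.arbitrary V, Finset.mem_univ _⟩
      set M := z v₁ with hM
      set ζ : V → ℕ := fun u => (M - z u).toNat with hζ
      have hζc : ∀ u, (ζ u : ℤ) = M - z u := fun u =>
        Int.toNat_of_nonneg (by have := hmax u (Finset.mem_univ u); omega)
      apply greedy' d (∑ u, ζ u) w ζ le_rfl
      intro v
      have h0 := heff v
      have hlin := hz v
      rw [lap_eq' d hsym] at hlin
      simp only [hζc]
      simp only [mul_sub, Finset.sum_sub_distrib, ← Finset.sum_mul]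
      have hdeg : (∑ u, (d u v : ℤ)) = (outDeg d v : ℤ) := by
        unfold outDeg; push_cast
        exact Finset.sum_congr rfl fun u _ => by rw [hsym]
      rw [hdeg]
      simp only at hlin
      linarith

lemma nonterm_iff' (d : V → V → ℕ) (w : V → ℕ) :
    Nonterminating d w ↔ ¬ Terminates d w := by
  constructor
  · rintro h ⟨l, hleg, hlt⟩
    obtain ⟨v, hv⟩ := h l hleg
    exact absurd (hlt v) (not_lt.mpr hv)
  · intro h l hleg
    by_contra hc
    push_neg at hc
    exact h ⟨l, hleg, fun v => hc v⟩

end Stmt15Aux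

/-- for a divisor `f` with `f(v) ≤ d(v) - 1` and its dual
chip-distribution `x = K⁺ - f`, one has `rank(f) = dist(x) - 1`. -/
theorem stmt15 {V : Type*} [Fintype V] [DecidableEq V]
    (d : V → V → ℕ) (hsym : ∀ u v, d u v = d v u) (hloop : Loopless d)
    (hconn : UConnected d) (f : V → ℤ)
    (hf : ∀ v, f v ≤ (outDeg d v : ℤ) - 1)
    (x : V → ℕ) (hx : ∀ v, (x v : ℤ) = (outDeg d v : ℤ) - 1 - f v)
    (r : ℤ) (hr : IsRank d f r)
    (n : ℕ)
    (hn : IsLeast {m : ℕ | ∃ y : V → ℕ,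
      Nonterminating d (fun v => x v + y v) ∧ ∑ v, y v = m} n) :
    r = (n : ℤ) - 1 := by
  have hfg : ∀ y : V → ℕ, ∀ v : V, f v - (y v : ℤ)
      = (outDeg d v : ℤ) - 1 - ((x v + y v : ℕ) : ℤ) := by
    intro y v
    have := hx v
    push_cast
    linarith
  obtain ⟨⟨y, hy, hysum⟩, hnlb⟩ := hn
  obtain ⟨⟨g, hgeff, hgno, hgdeg⟩, hrlb⟩ := hr
  have h1 : (n:ℤ) - 1 ∈ {m : ℤ | ∃ g : V → ℤ, Effective g ∧
      (¬ ∃ h : V → ℤ, Effective h ∧ LinEquiv d (fun v => f v - g v) h) ∧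
      m = divDeg g - 1} := by
    refine ⟨fun v => (y v : ℤ), fun v => Int.natCast_nonneg _, ?_, ?_⟩
    · rintro ⟨h, heff, hlin⟩
      have heq : (fun v => f v - (y v : ℤ))
          = (fun v => (outDeg d v : ℤ) - 1 - ((fun v => x v + y v) v : ℤ)) := by
        funext v; exact hfg y v
      rw [heq] at hlin
      exact (nonterm_iff' d _).mp hy
        ((terminates_iff' d hsym (fun v => x v + y v)).mpr ⟨h, heff, hlin⟩)
    · have : divDeg (fun v => (y v : ℤ)) = (n : ℤ) := by
        rw [divDeg, ← hysum]; push_cast; ring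
      rw [this]
  have hr1 : r ≤ (n:ℤ) - 1 := hrlb h1
  set y₂ : V → ℕ := fun v => (g v).toNat with hy₂
  have hy₂c : ∀ v, (y₂ v : ℤ) = g v := fun v => Int.toNat_of_nonneg (hgeff v)
  have h2 : (∑ v, y₂ v) ∈ {m : ℕ | ∃ y : V → ℕ,
      Nonterminating d (fun v => x v + y v) ∧ ∑ v, y v = m} := by
    refine ⟨y₂, ?_, rfl⟩
    rw [nonterm_iff']
    intro hterm
    obtain ⟨h, heff, hlin⟩ := (terminates_iff' d hsym _).mp hterm
    apply hgno
    refine ⟨h, heff, ?_⟩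
    have heq : (fun v => f v - g v)
        = (fun v => (outDeg d v : ℤ) - 1 - ((fun v => x v + y₂ v) v : ℤ)) := by
      funext v; rw [← hy₂c v]; exact hfg y₂ v
    rw [heq]
    exact hlin
  have hn1 : n ≤ ∑ v, y₂ v := hnlb h2
  have hdg : divDeg g = ((∑ v, y₂ v : ℕ) : ℤ) := by
    rw [divDeg]; push_cast
    exact Finset.sum_congr rfl fun v _ => (hy₂c v).symm
  have hn2 : (n:ℤ) ≤ divDeg g := by rw [hdg]; exact_mod_cast hn1
  omega
end

section
/- Let G be a connected graph and f a divisor on G with f(v) ≤ d(v) - 1 for all v. Then there exists an effective divisor linearly equivalent to f if and only if the chip-distribution K⁺ - f is terminating, where K⁺(v) = d(v) - 1. -/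
/- Common definitions for chip-firing on multigraphs/digraphs.

A digraph (without a fixed vertex enumeration) on a finite vertex type `V`
is given by its arc-multiplicity function `a : V → V → ℕ` (`a u v` = number
of arcs from `u` to `v`).  An undirected multigraph is the special case of a
symmetric multiplicity function `d` (`d u v` = number of edges between `u`
and `v`); then `outDeg d v = ∑ u, d v u` is the degree of `v`, and
`∑ v, ∑ u, d v u = 2 |E|`. -/

variable {V : Type*} [Fintype V] [DecidableEq V]

lemma aux_run_append (d : V → V → ℕ) (x : V → ℕ) (l l' : List V) :
    run d x (l ++ l') = run d (run d x l) l' := by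
  induction l generalizing x with
  | nil => rfl
  | cons a t ih => simp only [List.cons_append, run]; exact ih _

lemma aux_legal_append (d : V → V → ℕ) (x : V → ℕ) (l : List V) (v : V)
    (h1 : LegalGame d x l) (h2 : outDeg d v ≤ run d x l v) :
    LegalGame d x (l ++ [v]) := by
  induction l generalizing x with
  | nil => exact ⟨h2, trivial⟩
  | cons a t ih => exact ⟨h1.1, ih _ h1.2 h2⟩

lemma aux_fire_cast (d : V → V → ℕ) (x : V → ℕ) (a : V) (h : outDeg d a ≤ x a) (v : V) :
    ((fire d x a v : ℕ) : ℤ)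
      = (x v : ℤ) + (d a v : ℤ) - (if v = a then (outDeg d a : ℤ) else 0) := by
  unfold fire
  rcases eq_or_ne v a with rfl | hne
  · simp only [if_pos rfl]
    have h2 : outDeg d v ≤ x v + d v v := le_trans h (Nat.le_add_right _ _)
    push_cast [Nat.cast_sub h2]
    ring
  · simp [if_neg hne]

lemma aux_run_count (d : V → V → ℕ) (hsym : ∀ u v, d u v = d v u) :
    ∀ (l : List V) (x : V → ℕ), LegalGame d x l → ∀ v,
      (run d x l v : ℤ)
        = (x v : ℤ) + ∑ u, (d v u : ℤ) * ((l.count u : ℤ) - (l.count v : ℤ))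
  | [], x, _, v => by simp [run]
  | a :: t, x, h, v => by
    have ih := aux_run_count d hsym t (fire d x a) h.2 v
    have hf := aux_fire_cast d x a h.1 v
    have hcount : ∀ u : V, ((a :: t).count u : ℤ)
        = (t.count u : ℤ) + (if u = a then 1 else 0) := by
      intro u
      rcases eq_or_ne u a with rfl | hu
      · simp [List.count_cons_self]
      · simp [List.count_cons_of_ne hu.symm, hu]
    show (run d (fire d x a) t v : ℤ) = _
    rw [ih, hf]
    have hsum : ∑ u, (d v u : ℤ) * (((a :: t).count u : ℤ) - ((a :: t).count v : ℤ))
        = (∑ u, (d v u : ℤ) * ((t.count u : ℤ) - (t.count v : ℤ)))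
          + (d v a : ℤ) - (if v = a then (outDeg d v : ℤ) else 0) := by
      simp only [hcount]
      rw [show (∑ u, (d v u : ℤ) * (((t.count u : ℤ) + (if u = a then 1 else 0))
            - ((t.count v : ℤ) + (if v = a then 1 else 0))))
          = (∑ u, (d v u : ℤ) * ((t.count u : ℤ) - (t.count v : ℤ)))
            + (∑ u, (d v u : ℤ) * (if u = a then 1 else 0))
            - (∑ u, (d v u : ℤ) * (if v = a then 1 else 0)) by
        rw [← Finset.sum_add_distrib, ← Finset.sum_sub_distrib]
        exact Finset.sum_congr rfl fun u _ => by ring]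
      have h1 : (∑ u, (d v u : ℤ) * (if u = a then 1 else 0)) = (d v a : ℤ) := by
        rw [Finset.sum_eq_single a]
        · simp
        · intro b _ hb; simp [hb]
        · intro hb; exact absurd (Finset.mem_univ a) hb
      have h2 : (∑ u, (d v u : ℤ) * (if v = a then 1 else 0))
          = (if v = a then (outDeg d v : ℤ) else 0) := by
        rcases eq_or_ne v a with rfl | hv
        · simp [outDeg]
        · simp [hv]
      rw [h1, h2]
    rw [hsum]
    have : (d a v : ℤ) = (d v a : ℤ) := by rw [hsym]
    rcases eq_or_ne v a with rfl | hv
    · simp; linarith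
    · simp [hv]; linarith

lemma aux_game_length (d : V → V → ℕ) (hsym : ∀ u v, d u v = d v u) :
    ∀ (l : List V) (x : V → ℕ) (w : V → ℤ), (∀ v, 0 ≤ w v) →
      (∀ v, (x v : ℤ) + ∑ u, (d v u : ℤ) * (w u - w v) ≤ (outDeg d v : ℤ) - 1) →
      LegalGame d x l → (l.length : ℤ) ≤ ∑ v, w v
  | [], _, w, hw, _, _ => by
      simpa using Finset.sum_nonneg fun v _ => hw v
  | a :: t, x, w, hw, hy, h => by
    have hxa : (outDeg d a : ℤ) ≤ (x a : ℤ) := Int.ofNat_le.mpr h.1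
    have hwa : 1 ≤ w a := by
      by_contra hc
      push_neg at hc
      have h0 : w a = 0 := le_antisymm (by omega) (hw a)
      have hsum : 0 ≤ ∑ u, (d a u : ℤ) * (w u - w a) :=
        Finset.sum_nonneg fun u _ => mul_nonneg (Int.ofNat_nonneg _)
          (by rw [h0]; simpa using hw u)
      have := hy a
      linarith
    set w' : V → ℤ := fun v => w v - (if v = a then 1 else 0) with hw'def
    have hw' : ∀ v, 0 ≤ w' v := by
      intro v
      rcases eq_or_ne v a with rfl | hv
      · simp [hw'def]; linarith
      · simp [hw'def, hv]; exact hw v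
    have hy' : ∀ v, ((fire d x a v : ℕ) : ℤ)
        + ∑ u, (d v u : ℤ) * (w' u - w' v) ≤ (outDeg d v : ℤ) - 1 := by
      intro v
      have hf := aux_fire_cast d x a h.1 v
      have hsum : ∑ u, (d v u : ℤ) * (w' u - w' v)
          = (∑ u, (d v u : ℤ) * (w u - w v))
            - (d v a : ℤ) + (if v = a then (outDeg d v : ℤ) else 0) := by
        simp only [hw'def]
        rw [show (∑ u, (d v u : ℤ) * ((w u - (if u = a then 1 else 0))
              - (w v - (if v = a then 1 else 0))))
            = (∑ u, (d v u : ℤ) * (w u - w v))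
              - (∑ u, (d v u : ℤ) * (if u = a then 1 else 0))
              + (∑ u, (d v u : ℤ) * (if v = a then 1 else 0)) by
          rw [← Finset.sum_sub_distrib, ← Finset.sum_add_distrib]
          exact Finset.sum_congr rfl fun u _ => by ring]
        have h1 : (∑ u, (d v u : ℤ) * (if u = a then 1 else 0)) = (d v a : ℤ) := by
          rw [Finset.sum_eq_single a]
          · simp
          · intro b _ hb; simp [hb]
          · intro hb; exact absurd (Finset.mem_univ a) hb
        have h2 : (∑ u, (d v u : ℤ) * (if v = a then 1 else 0))
            = (if v = a then (outDeg d v : ℤ) else 0) := by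
          rcases eq_or_ne v a with rfl | hv
          · simp [outDeg]
          · simp [hv]
        rw [h1, h2]
      rw [hf, hsum]
      have hdsym : (d a v : ℤ) = (d v a : ℤ) := by rw [hsym]
      have := hy v
      rcases eq_or_ne v a with rfl | hv
      · simp at *; linarith
      · simp [hv] at *; linarith
    have ih := aux_game_length d hsym t (fire d x a) w' hw' hy' h.2
    have hsw : ∑ v, w' v = (∑ v, w v) - 1 := by
      simp only [hw'def]
      rw [Finset.sum_sub_distrib]
      congr 1
      rw [Finset.sum_eq_single a]
      · simp
      · intro b _ hb; simp [hb]
      · intro hb; exact absurd (Finset.mem_univ a) hb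
    simp only [List.length_cons]
    push_cast
    linarith [ih, hsw.le, hsw.ge]

/-- Baker–Norine duality: for a divisor `f` with `f(v) ≤ d(v) - 1`,
there is an effective divisor linearly equivalent to `f` iff the dual
chip-distribution `K⁺ - f` is terminating. -/
theorem stmt16 {V : Type*} [Fintype V] [DecidableEq V]
    (d : V → V → ℕ) (hsym : ∀ u v, d u v = d v u) (hloop : Loopless d)
    (hconn : UConnected d) (f : V → ℤ)
    (hf : ∀ v, f v ≤ (outDeg d v : ℤ) - 1)
    (x : V → ℕ) (hx : ∀ v, (x v : ℤ) = (outDeg d v : ℤ) - 1 - f v) :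
    (∃ h : V → ℤ, Effective h ∧ LinEquiv d f h) ↔ Terminates d x := by
  constructor
  · rintro ⟨h, hEff, z, hz⟩
    by_contra hnt
    rcases isEmpty_or_nonempty V with hV | hV
    · exact hnt ⟨[], trivial, fun v => isEmptyElim v⟩
    have hne : (Finset.univ : Finset V).Nonempty := Finset.univ_nonempty
    set C : ℤ := Finset.univ.sup' hne z with hC
    set w : V → ℤ := fun v => C - z v with hwdef
    have hw : ∀ v, 0 ≤ w v := fun v => by
      simp only [hwdef, sub_nonneg, hC]
      exact Finset.le_sup' z (Finset.mem_univ v)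
    have hy : ∀ v, (x v : ℤ) + ∑ u, (d v u : ℤ) * (w u - w v) ≤ (outDeg d v : ℤ) - 1 := by
      intro v
      have hsum : ∑ u, (d v u : ℤ) * (w u - w v)
          = -∑ u, (d v u : ℤ) * (z u - z v) := by
        rw [← Finset.sum_neg_distrib]
        exact Finset.sum_congr rfl fun u _ => by simp [hwdef]; ring
      rw [hsum, hx v]
      have := hz v
      have := hEff v
      linarith
    -- arbitrarily long legal games
    have hnt' : ∀ l : List V, LegalGame d x l → ∃ v, outDeg d v ≤ run d x l v := by
      intro l hl
      by_contra hc
      push_neg at hc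
      exact hnt ⟨l, hl, hc⟩
    have key : ∀ n : ℕ, ∃ l : List V, LegalGame d x l ∧ l.length = n := by
      intro n
      induction n with
      | zero => exact ⟨[], trivial, rfl⟩
      | succ n ih =>
        obtain ⟨l, hl, hlen⟩ := ih
        obtain ⟨v, hv⟩ := hnt' l hl
        exact ⟨l ++ [v], aux_legal_append d x l v hl hv, by simp [hlen]⟩
    have hS : 0 ≤ ∑ v, w v := Finset.sum_nonneg fun v _ => hw v
    obtain ⟨l, hl, hlen⟩ := key ((∑ v, w v).toNat + 1)
    have hbound := aux_game_length d hsym l x w hw hy hl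
    rw [hlen] at hbound
    push_cast at hbound
    rw [Int.toNat_of_nonneg hS] at hbound
    linarith
  · rintro ⟨l, hl, hst⟩
    refine ⟨fun v => (outDeg d v : ℤ) - 1 - (run d x l v : ℤ), fun v => ?_,
      fun u => -(l.count u : ℤ), fun v => ?_⟩
    · have h2 : (run d x l v : ℤ) < (outDeg d v : ℤ) := by exact_mod_cast hst v
      simp only []
      linarith
    · show (outDeg d v : ℤ) - 1 - (run d x l v : ℤ)
          = f v + ∑ u, (d v u : ℤ) * (-(l.count u : ℤ) - -(l.count v : ℤ))
      have hrc := aux_run_count d hsym l x hl v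
      have hsum : ∑ u, (d v u : ℤ) * (-(l.count u : ℤ) - -(l.count v : ℤ))
          = -∑ u, (d v u : ℤ) * ((l.count u : ℤ) - (l.count v : ℤ)) := by
        rw [← Finset.sum_neg_distrib]
        exact Finset.sum_congr rfl fun u _ => by ring
      rw [hsum]
      have := hx v
      linarith
end

section
/- Let D be a digraph, F a minimum cardinality feedback arc set of D, and v₀ a vertex such that F contains exactly the in-edges of v₀ among edges incident to v₀. Let F' be obtained from F by removing all in-edges of v₀ and adding all out-edges of v₀. Then F' is also a feedback arc set of D, and if D is Eulerian then |F'| = |F|, so F' is also of minimum cardinality. -/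
/- Common definitions for chip-firing on multigraphs/digraphs.

A digraph (without a fixed vertex enumeration) on a finite vertex type `V`
is given by its arc-multiplicity function `a : V → V → ℕ` (`a u v` = number
of arcs from `u` to `v`).  An undirected multigraph is the special case of a
symmetric multiplicity function `d` (`d u v` = number of edges between `u`
and `v`); then `outDeg d v = ∑ u, d v u` is the degree of `v`, and
`∑ v, ∑ u, d v u = 2 |E|`. -/

variable {V : Type*} [Fintype V] [DecidableEq V]

/-- swapping, in a minimum feedback arc set `f`, the in-edges of a
vertex `v₀` (all of which lie in `f`, while no out-edge of `v₀` does) for the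
out-edges of `v₀` yields again a feedback arc set; if `D` is Eulerian it has the
same cardinality, hence is again minimum. -/
theorem stmt18 {V : Type*} [Fintype V] [DecidableEq V]
    (a : V → V → ℕ) (hloop : Loopless a)
    (f : V → V → ℕ) (hfas : IsFAS a f)
    (hmin : ∀ g : V → V → ℕ, IsFAS a g → arcSize f ≤ arcSize g)
    (v₀ : V) (hin : ∀ u, f u v₀ = a u v₀) (hout : ∀ u, f v₀ u = 0) :
    IsFAS a (fun u v => if v = v₀ then 0 else if u = v₀ then a u v else f u v) ∧
    (EulerianD a →
      arcSize (fun u v => if v = v₀ then 0 else if u = v₀ then a u v else f u v)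
        = arcSize f) := by
  set f' : V → V → ℕ := fun u v => if v = v₀ then 0 else if u = v₀ then a u v else f u v
    with hf'
  have hsink : ∀ q, ¬ (0 < a v₀ q - f' v₀ q) := by
    intro q
    by_cases h : q = v₀
    · simp [hf', h, hloop v₀]
    · simp [hf', h]
  have hstep : ∀ p q, 0 < a p q - f' p q → q ≠ v₀ → 0 < a p q - f p q := by
    intro p q hs hq
    have hp : p ≠ v₀ := fun h => hsink q (h ▸ hs)
    simpa [hf', hq, hp] using hs
  have key : ∀ x y, Relation.TransGen (fun p q => 0 < a p q - f' p q) x y → y ≠ v₀ →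
      Relation.TransGen (fun p q => 0 < a p q - f p q) x y := by
    intro x y h
    induction h with
    | single h => intro hy; exact Relation.TransGen.single (hstep _ _ h hy)
    | tail hxb hbc ih =>
        intro hc
        rename_i b c
        have hb : b ≠ v₀ := fun h => hsink c (h ▸ hbc)
        exact Relation.TransGen.tail (ih hb) (hstep _ _ hbc hc)
  constructor
  · constructor
    · intro u v
      by_cases hv : v = v₀ <;> by_cases hu : u = v₀ <;> simp [hf', hv, hu, hfas.1 u v]
    · intro v hcyc
      by_cases hv : v = v₀
      · have nost : ∀ y, ¬ Relation.TransGen (fun p q => 0 < a p q - f' p q) v₀ y := by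
          intro y h
          induction h with
          | single h => exact hsink _ h
          | tail _ hbc ih => exact ih
        rw [hv] at hcyc
        exact nost v₀ hcyc
      · exact hfas.2 v (key v v hcyc hv)
  · intro heul
    have hpt : ∀ u v, f' u v + (if v = v₀ then a u v₀ else 0)
        = f u v + (if u = v₀ then (if v = v₀ then 0 else a v₀ v) else 0) := by
      intro u v
      by_cases hv : v = v₀ <;> by_cases hu : u = v₀ <;>
        simp [hf', hv, hu, hin, hout, hloop]
    have hs : ∑ u, ∑ v, (f' u v + if v = v₀ then a u v₀ else 0)
        = ∑ u, ∑ v, (f u v + if u = v₀ then (if v = v₀ then 0 else a v₀ v) else 0) :=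
      Finset.sum_congr rfl fun u _ => Finset.sum_congr rfl fun v _ => hpt u v
    have hL : ∑ u, ∑ v, (f' u v + if v = v₀ then a u v₀ else 0)
        = arcSize f' + inDeg a v₀ := by
      unfold arcSize inDeg
      rw [← Finset.sum_add_distrib]
      refine Finset.sum_congr rfl fun u _ => ?_
      rw [Finset.sum_add_distrib, Finset.sum_ite_eq' Finset.univ v₀]
      simp
    have hR : ∑ u, ∑ v, (f u v + if u = v₀ then (if v = v₀ then 0 else a v₀ v) else 0)
        = arcSize f + outDeg a v₀ := by
      unfold arcSize outDeg
      have hrow : ∑ v, (if v = v₀ then 0 else a v₀ v) = ∑ v, a v₀ v :=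
        Finset.sum_congr rfl fun v _ => by
          by_cases h : v = v₀ <;> simp [h, hloop v₀]
      have : ∀ u, ∑ v, (f u v + if u = v₀ then (if v = v₀ then 0 else a v₀ v) else 0)
          = (∑ v, f u v) + (if u = v₀ then ∑ v, a v₀ v else 0) := by
        intro u
        by_cases hu : u = v₀
        · simp only [hu, if_true, Finset.sum_add_distrib, hrow]
        · simp [hu]
      rw [Finset.sum_congr rfl fun u _ => this u, Finset.sum_add_distrib,
        Finset.sum_ite_eq' Finset.univ v₀]
      simp
    have hsum : arcSize f' + inDeg a v₀ = arcSize f + outDeg a v₀ := by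
      rw [← hL, ← hR, hs]
    have := heul v₀
    omega
end
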